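/- For s ∈ {-3, -2, 5, 6}, the domination ratio of Γ(ℤ, {1,2,3,s}) equals 1/4. -/

import Mathlib

open Filter

/-- Lower density of a set of integers. -/
noncomputable def lowerDensity (D : Set ℤ) : ℝ :=
  Filter.liminf (fun n : ℕ =>
    ((D ∩ Set.Icc (-(n : ℤ)) (n : ℤ)).ncard : ℝ) / (2 * (n : ℝ) + 1)) Filter.atTop

/-- `D` is a dominating set of the integer distance digraph `Γ(ℤ,S)`. -/
def Dominating (S D : Set ℤ) : Prop :=
  ∀ m : ℤ, m ∈ D ∨ ∃ u ∈ D, ∃ s ∈ S, m = u + s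

/-- Domination ratio of `Γ(ℤ,S)`. -/
noncomputable def dominationRatio (S : Set ℤ) : ℝ :=
  sInf (lowerDensity '' {D : Set ℤ | Dominating S D})

/-- `D` is an efficient dominating set of `Γ(ℤ,S)`: every integer is dominated
by exactly one element of `D`. -/
def EffDominating (S D : Set ℤ) : Prop :=
  ∀ m : ℤ, ∃! u, u ∈ D ∧ (u = m ∨ m - u ∈ S)

lemma ncard_step (D : Set ℤ) (a b c : ℤ) (E : Set ℤ) (hE : E.Finite)
    (hsub : E ⊆ D ∩ Set.Ico c b) (hac : a ≤ c) (hcb : c ≤ b) :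
    (D ∩ Set.Ico a c).ncard + E.ncard ≤ (D ∩ Set.Ico a b).ncard := by
  have hfin1 : (D ∩ Set.Ico a c).Finite := (Set.finite_Ico a c).inter_of_right D
  have hfinb : (D ∩ Set.Ico a b).Finite := (Set.finite_Ico a b).inter_of_right D
  have hdisj : Disjoint (D ∩ Set.Ico a c) E := by
    rw [Set.disjoint_left]
    rintro x ⟨-, -, hxc⟩ hxE
    exact absurd (hsub hxE).2.1 (not_le.2 hxc)
  have hun : (D ∩ Set.Ico a c) ∪ E ⊆ D ∩ Set.Ico a b := by
    rintro x (⟨h1, h2, h3⟩ | hx)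
    · exact ⟨h1, h2, h3.trans_le hcb⟩
    · obtain ⟨hD, h1, h2⟩ := hsub hx
      exact ⟨hD, hac.trans h1, h2⟩
  rw [← Set.ncard_union_eq hdisj hfin1 hE]
  exact Set.ncard_le_ncard hun hfinb

lemma key (s : ℤ) (hs : s = 5 ∨ s = 6) (D : Set ℤ)
    (hdom : ∀ m : ℤ, ∃ u ∈ D, m - u = 0 ∨ m - u = 1 ∨ m - u = 2 ∨ m - u = 3 ∨ m - u = s) :
    ∀ n : ℕ, ∀ a : ℤ, (n : ℤ) ≤ 4 * ((D ∩ Set.Ico a (a + n)).ncard : ℤ) + 13 := by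
  intro n
  induction n using Nat.strong_induction_on with
  | _ n ih =>
  intro a
  by_cases hn : (n : ℤ) ≤ 13
  · omega
  push_neg at hn
  set m : ℤ := a + (n : ℤ) - 1 with hm
  have finish1 : ∀ u : ℤ, u ∈ D → a ≤ u → u < a + (n : ℤ) → (n : ℤ) - 4 ≤ u - a →
      (n : ℤ) ≤ 4 * ((D ∩ Set.Ico a (a + (n : ℕ))).ncard : ℤ) + 13 := by
    intro u hu h1 h2 h3
    obtain ⟨k, hk⟩ : ∃ k : ℕ, (k : ℤ) = u - a := ⟨(u - a).toNat, Int.toNat_of_nonneg (by omega)⟩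
    have hik := ih k (by omega) a
    rw [show a + (k : ℤ) = u by omega] at hik
    have hstep := ncard_step D a (a + (n : ℤ)) u {u} (Set.finite_singleton u)
      (Set.singleton_subset_iff.mpr ⟨hu, le_refl u, h2⟩) h1 (by omega)
    rw [Set.ncard_singleton] at hstep
    omega
  have finish2 : ∀ u v c : ℤ, u ∈ D → v ∈ D → u ≠ v → a ≤ c → c ≤ u → c ≤ v →
      u < a + (n : ℤ) → v < a + (n : ℤ) → (n : ℤ) - 8 ≤ c - a →
      (n : ℤ) ≤ 4 * ((D ∩ Set.Ico a (a + (n : ℕ))).ncard : ℤ) + 13 := by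
    intro u v c hu hv huv hac hcu hcv hub hvb h3
    obtain ⟨k, hk⟩ : ∃ k : ℕ, (k : ℤ) = c - a := ⟨(c - a).toNat, Int.toNat_of_nonneg (by omega)⟩
    have hik := ih k (by omega) a
    rw [show a + (k : ℤ) = c by omega] at hik
    have hstep := ncard_step D a (a + (n : ℤ)) c {u, v} (Set.toFinite _)
      (Set.insert_subset_iff.mpr ⟨⟨hu, hcu, hub⟩, Set.singleton_subset_iff.mpr ⟨hv, hcv, hvb⟩⟩)
      hac (by omega)
    rw [Set.ncard_pair huv] at hstep
    omega
  have finish3 : ∀ u v w c : ℤ, u ∈ D → v ∈ D → w ∈ D → u ≠ v → u ≠ w → v ≠ w →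
      a ≤ c → c ≤ u → c ≤ v → c ≤ w →
      u < a + (n : ℤ) → v < a + (n : ℤ) → w < a + (n : ℤ) → (n : ℤ) - 12 ≤ c - a →
      (n : ℤ) ≤ 4 * ((D ∩ Set.Ico a (a + (n : ℕ))).ncard : ℤ) + 13 := by
    intro u v w c hu hv hw huv huw hvw hac hcu hcv hcw hub hvb hwb h3
    obtain ⟨k, hk⟩ : ∃ k : ℕ, (k : ℤ) = c - a := ⟨(c - a).toNat, Int.toNat_of_nonneg (by omega)⟩
    have hik := ih k (by omega) a
    rw [show a + (k : ℤ) = c by omega] at hik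
    have hcard : ({u, v, w} : Set ℤ).ncard = 3 := by
      rw [Set.ncard_insert_of_notMem (by simp [huv, huw]) (Set.toFinite _),
        Set.ncard_pair hvw]
    have hstep := ncard_step D a (a + (n : ℤ)) c {u, v, w} (Set.toFinite _)
      (Set.insert_subset_iff.mpr ⟨⟨hu, hcu, hub⟩, Set.insert_subset_iff.mpr ⟨⟨hv, hcv, hvb⟩,
        Set.singleton_subset_iff.mpr ⟨hw, hcw, hwb⟩⟩⟩) hac (by omega)
    rw [hcard] at hstep
    omega
  obtain ⟨u, hu, hucase⟩ := hdom m
  rcases hucase with h | h | h | h | h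
  · exact finish1 u hu (by omega) (by omega) (by omega)
  · exact finish1 u hu (by omega) (by omega) (by omega)
  · exact finish1 u hu (by omega) (by omega) (by omega)
  · exact finish1 u hu (by omega) (by omega) (by omega)
  · -- u = m - s
    obtain ⟨v, hv, hvcase⟩ := hdom (m - 1)
    rcases hs with rfl | rfl
    · -- s = 5, u = m - 5
      rcases hvcase with h2 | h2 | h2 | h2 | h2
      · exact finish2 u v u hu hv (by omega) (by omega) (by omega) (by omega) (by omega)
          (by omega) (by omega)
      · exact finish2 u v u hu hv (by omega) (by omega) (by omega) (by omega) (by omega)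
          (by omega) (by omega)
      · exact finish2 u v u hu hv (by omega) (by omega) (by omega) (by omega) (by omega)
          (by omega) (by omega)
      · exact finish2 u v u hu hv (by omega) (by omega) (by omega) (by omega) (by omega)
          (by omega) (by omega)
      · -- v = m - 6
        exact finish2 u v v hu hv (by omega) (by omega) (by omega) (by omega) (by omega)
          (by omega) (by omega)
    · -- s = 6, u = m - 6
      rcases hvcase with h2 | h2 | h2 | h2 | h2
      · exact finish2 u v u hu hv (by omega) (by omega) (by omega) (by omega) (by omega)
          (by omega) (by omega)
      · exact finish2 u v u hu hv (by omega) (by omega) (by omega) (by omega) (by omega)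
          (by omega) (by omega)
      · exact finish2 u v u hu hv (by omega) (by omega) (by omega) (by omega) (by omega)
          (by omega) (by omega)
      · exact finish2 u v u hu hv (by omega) (by omega) (by omega) (by omega) (by omega)
          (by omega) (by omega)
      · -- v = m - 7
        obtain ⟨w, hw, hwcase⟩ := hdom (m - 2)
        rcases hwcase with h3 | h3 | h3 | h3 | h3
        · exact finish3 u v w v hu hv hw (by omega) (by omega) (by omega) (by omega)
            (by omega) (by omega) (by omega) (by omega) (by omega) (by omega) (by omega)
        · exact finish3 u v w v hu hv hw (by omega) (by omega) (by omega) (by omega)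
            (by omega) (by omega) (by omega) (by omega) (by omega) (by omega) (by omega)
        · exact finish3 u v w v hu hv hw (by omega) (by omega) (by omega) (by omega)
            (by omega) (by omega) (by omega) (by omega) (by omega) (by omega) (by omega)
        · exact finish3 u v w v hu hv hw (by omega) (by omega) (by omega) (by omega)
            (by omega) (by omega) (by omega) (by omega) (by omega) (by omega) (by omega)
        · -- w = m - 8
          exact finish3 u v w w hu hv hw (by omega) (by omega) (by omega) (by omega)
            (by omega) (by omega) (by omega) (by omega) (by omega) (by omega) (by omega)

lemma refl_count (s : ℤ) (hs : s = 5 ∨ s = 6) (D : Set ℤ)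
    (hdom : ∀ m : ℤ, ∃ u ∈ D, m - u = 0 ∨ m - u = 1 ∨ m - u = 2 ∨ m - u = 3 ∨ m - u = 3 - s)
    (n : ℕ) :
    (2 * (n : ℤ) + 1) ≤ 4 * ((D ∩ Set.Icc (-(n : ℤ)) n).ncard : ℤ) + 13 := by
  set f : ℤ → ℤ := fun x => -3 - x with hf
  have hinj : Function.Injective f := by intro x y h; simp only [hf] at h; omega
  set D' : Set ℤ := f '' D with hD'
  have hdom' : ∀ m : ℤ, ∃ u ∈ D', m - u = 0 ∨ m - u = 1 ∨ m - u = 2 ∨ m - u = 3 ∨ m - u = s := by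
    intro m
    obtain ⟨u, hu, hc⟩ := hdom (-m)
    exact ⟨f u, ⟨u, hu, rfl⟩, by simp only [hf]; omega⟩
  have hkey := key s hs D' hdom' (2 * n + 1) (-(n : ℤ) - 3)
  have himg : f '' (D ∩ Set.Icc (-(n : ℤ)) n)
      = D' ∩ Set.Ico (-(n : ℤ) - 3) (-(n : ℤ) - 3 + ((2 * n + 1 : ℕ) : ℤ)) := by
    ext y
    simp only [Set.mem_image, Set.mem_inter_iff, Set.mem_Icc, Set.mem_Ico, hD', hf]
    constructor
    · rintro ⟨x, ⟨hxD, hx1, hx2⟩, rfl⟩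
      exact ⟨⟨x, hxD, rfl⟩, by push_cast; omega⟩
    · rintro ⟨⟨x, hxD, rfl⟩, hy1, hy2⟩
      push_cast at hy2
      exact ⟨x, ⟨hxD, by omega, by omega⟩, rfl⟩
  have hcard : (D ∩ Set.Icc (-(n : ℤ)) n).ncard
      = (D' ∩ Set.Ico (-(n : ℤ) - 3) (-(n : ℤ) - 3 + ((2 * n + 1 : ℕ) : ℤ))).ncard := by
    rw [← himg, Set.ncard_image_of_injective _ hinj]
  rw [← hcard] at hkey
  push_cast at hkey ⊢
  omega

lemma main_count (s : ℤ) (hs : s = -3 ∨ s = -2 ∨ s = 5 ∨ s = 6) (D : Set ℤ)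
    (hD : Dominating {1, 2, 3, s} D) (n : ℕ) :
    (2 * (n : ℤ) + 1) ≤ 4 * ((D ∩ Set.Icc (-(n : ℤ)) n).ncard : ℤ) + 13 := by
  have hdom : ∀ m : ℤ, ∃ u ∈ D, m - u = 0 ∨ m - u = 1 ∨ m - u = 2 ∨ m - u = 3 ∨ m - u = s := by
    intro m
    rcases hD m with hm | ⟨u, hu, t, ht, rfl⟩
    · exact ⟨m, hm, Or.inl (sub_self m)⟩
    · refine ⟨u, hu, ?_⟩
      simp only [Set.mem_insert_iff, Set.mem_singleton_iff] at ht
      rcases ht with rfl | rfl | rfl | rfl <;> omega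
  have hpos : ∀ t : ℤ, t = 5 ∨ t = 6 → s = t →
      (2 * (n : ℤ) + 1) ≤ 4 * ((D ∩ Set.Icc (-(n : ℤ)) n).ncard : ℤ) + 13 := by
    intro t ht hst
    rw [hst] at hdom
    have hkey := key t ht D hdom (2 * n + 1) (-(n : ℤ))
    have hset : Set.Ico (-(n : ℤ)) (-(n : ℤ) + ((2 * n + 1 : ℕ) : ℤ)) = Set.Icc (-(n : ℤ)) n := by
      ext x
      simp only [Set.mem_Ico, Set.mem_Icc]
      push_cast
      omega
    rw [hset] at hkey
    push_cast at hkey ⊢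
    omega
  rcases hs with rfl | rfl | rfl | rfl
  · exact refl_count 6 (Or.inr rfl) D (by simpa using hdom) n
  · exact refl_count 5 (Or.inl rfl) D (by simpa using hdom) n
  · exact hpos 5 (Or.inl rfl) rfl
  · exact hpos 6 (Or.inr rfl) rfl

lemma count_le (D : Set ℤ) (n : ℕ) : (D ∩ Set.Icc (-(n : ℤ)) n).ncard ≤ 2 * n + 1 := by
  calc (D ∩ Set.Icc (-(n : ℤ)) n).ncard ≤ (Set.Icc (-(n : ℤ)) n).ncard :=
        Set.ncard_le_ncard Set.inter_subset_right (Set.finite_Icc _ _)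
    _ = 2 * n + 1 := by
        rw [← Finset.coe_Icc, Set.ncard_coe_finset, Int.card_Icc]; omega

lemma LB (D : Set ℤ)
    (hc : ∀ n : ℕ, (2 * (n : ℤ) + 1) ≤ 4 * ((D ∩ Set.Icc (-(n : ℤ)) n).ncard : ℤ) + 13) :
    1 / 4 ≤ lowerDensity D := by
  set f : ℕ → ℝ := fun n : ℕ =>
    ((D ∩ Set.Icc (-(n : ℤ)) (n : ℤ)).ncard : ℝ) / (2 * (n : ℝ) + 1) with hf
  set g : ℕ → ℝ := fun n : ℕ => 1 / 4 - 13 / (4 * (2 * (n : ℝ) + 1)) with hg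
  have h1 : Filter.Tendsto (fun n : ℕ => 13 / (4 * (2 * (n : ℝ) + 1))) atTop (nhds 0) := by
    apply squeeze_zero' (g := fun n : ℕ => 13 / (n : ℝ))
    · filter_upwards with n; positivity
    · filter_upwards [eventually_ge_atTop 1] with n hn
      have hn' : (1 : ℝ) ≤ (n : ℝ) := by exact_mod_cast hn
      apply div_le_div_of_nonneg_left (by norm_num) (by linarith) (by linarith)
    · exact tendsto_const_div_atTop_nhds_zero_nat 13
  have hgt : Filter.Tendsto g atTop (nhds (1 / 4)) := by
    simpa [hg] using (tendsto_const_nhds (x := (1 / 4 : ℝ)) (f := atTop (α := ℕ))).sub h1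
  have hle : ∀ n : ℕ, g n ≤ f n := by
    intro n
    have hc' := hc n
    have hcast : (2 * (n : ℝ) + 1) ≤ 4 * ((D ∩ Set.Icc (-(n : ℤ)) (n : ℤ)).ncard : ℝ) + 13 := by
      exact_mod_cast hc'
    have hpos : (0 : ℝ) < 2 * (n : ℝ) + 1 := by positivity
    simp only [hg, hf]
    rw [show (1 : ℝ) / 4 - 13 / (4 * (2 * (n : ℝ) + 1))
        = (2 * (n : ℝ) + 1 - 13) / (4 * (2 * (n : ℝ) + 1)) by field_simp <;> ring]
    rw [div_le_div_iff₀ (by positivity) hpos]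
    nlinarith [hcast, hpos]
  have hcb : IsCoboundedUnder (· ≥ ·) atTop f := by
    apply isCoboundedUnder_ge_of_eventually_le atTop (x := 1)
    filter_upwards with n
    simp only [hf]
    rw [div_le_one (by positivity)]
    have := count_le D n
    have : ((D ∩ Set.Icc (-(n : ℤ)) (n : ℤ)).ncard : ℝ) ≤ 2 * (n : ℝ) + 1 := by
      exact_mod_cast this
    linarith
  calc (1 : ℝ) / 4 = liminf g atTop := hgt.liminf_eq.symm
    _ ≤ liminf f atTop := liminf_le_liminf (.of_forall hle) hgt.isBoundedUnder_ge hcb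
    _ = lowerDensity D := rfl

lemma D0_dominating (s : ℤ) : Dominating {1, 2, 3, s} {x : ℤ | (4 : ℤ) ∣ x} := by
  intro m
  have h4 : 4 * (m / 4) + m % 4 = m := Int.mul_ediv_add_emod m 4
  have hr0 : 0 ≤ m % 4 := Int.emod_nonneg m (by norm_num)
  have hr4 : m % 4 < 4 := Int.emod_lt_of_pos m (by norm_num)
  by_cases h0 : m % 4 = 0
  · exact Or.inl ⟨m / 4, by omega⟩
  · refine Or.inr ⟨4 * (m / 4), ⟨m / 4, rfl⟩, m % 4, ?_, by omega⟩
    simp only [Set.mem_insert_iff, Set.mem_singleton_iff]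
    omega

lemma D0_count (n : ℕ) :
    ({x : ℤ | (4 : ℤ) ∣ x} ∩ Set.Icc (-(n : ℤ)) n).ncard ≤ 2 * (n / 4) + 1 := by
  have hsub : {x : ℤ | (4 : ℤ) ∣ x} ∩ Set.Icc (-(n : ℤ)) n
      ⊆ (fun k : ℤ => 4 * k) '' Set.Icc (-((n / 4 : ℕ) : ℤ)) ((n / 4 : ℕ) : ℤ) := by
    rintro x ⟨⟨k, rfl⟩, hx1, hx2⟩
    exact ⟨k, ⟨by omega, by omega⟩, rfl⟩
  calc ({x : ℤ | (4 : ℤ) ∣ x} ∩ Set.Icc (-(n : ℤ)) n).ncard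
      ≤ ((fun k : ℤ => 4 * k) '' Set.Icc (-((n / 4 : ℕ) : ℤ)) ((n / 4 : ℕ) : ℤ)).ncard :=
        Set.ncard_le_ncard hsub ((Set.finite_Icc _ _).image _)
    _ ≤ (Set.Icc (-((n / 4 : ℕ) : ℤ)) ((n / 4 : ℕ) : ℤ)).ncard :=
        Set.ncard_image_le (Set.finite_Icc _ _)
    _ = 2 * (n / 4) + 1 := by
        rw [← Finset.coe_Icc, Set.ncard_coe_finset, Int.card_Icc]; omega

lemma D0_density_le : lowerDensity {x : ℤ | (4 : ℤ) ∣ x} ≤ 1 / 4 := by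
  set f : ℕ → ℝ := fun n : ℕ =>
    (({x : ℤ | (4 : ℤ) ∣ x} ∩ Set.Icc (-(n : ℤ)) (n : ℤ)).ncard : ℝ) / (2 * (n : ℝ) + 1) with hf
  set h : ℕ → ℝ := fun n : ℕ => ((n : ℝ) / 2 + 1) / (2 * (n : ℝ) + 1) with hh
  have hht : Filter.Tendsto h atTop (nhds (1 / 4)) := by
    have h2 : Filter.Tendsto (fun n : ℕ => ((1 : ℝ) / 2 + 1 / n) / (2 + 1 / n)) atTop
        (nhds (1 / 4)) := by
      have := (tendsto_const_nhds (x := (1 / 2 : ℝ)) (f := atTop (α := ℕ))).add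
        tendsto_one_div_atTop_nhds_zero_nat
      have h3 := this.div ((tendsto_const_nhds (x := (2 : ℝ)) (f := atTop (α := ℕ))).add
        tendsto_one_div_atTop_nhds_zero_nat) (by norm_num)
      norm_num at h3
      convert h3 using 2
      norm_num
    apply h2.congr'
    filter_upwards [eventually_ge_atTop 1] with n hn
    have hn' : (0 : ℝ) < (n : ℝ) := by exact_mod_cast Nat.pos_of_ne_zero (by omega)
    simp only [hh]
    field_simp
  have hle : ∀ n : ℕ, f n ≤ h n := by
    intro n
    have hcount := D0_count n
    have hc1 : (({x : ℤ | (4 : ℤ) ∣ x} ∩ Set.Icc (-(n : ℤ)) (n : ℤ)).ncard : ℝ)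
        ≤ 2 * ((n / 4 : ℕ) : ℝ) + 1 := by exact_mod_cast hcount
    have hc2 : ((n / 4 : ℕ) : ℝ) ≤ (n : ℝ) / 4 := by
      have h1 : 4 * (n / 4) ≤ n := Nat.mul_div_le n 4
      have h2 := (Nat.cast_le (α := ℝ)).2 h1
      push_cast at h2
      linarith
    simp only [hf, hh]
    apply div_le_div_of_nonneg_right ?_ (by positivity)
    linarith
  have hbd : IsBoundedUnder (· ≥ ·) atTop f :=
    isBoundedUnder_of ⟨0, fun n => by simp only [hf]; positivity⟩
  calc lowerDensity {x : ℤ | (4 : ℤ) ∣ x} = liminf f atTop := rfl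
    _ ≤ liminf h atTop := liminf_le_liminf (.of_forall hle) hbd hht.isCoboundedUnder_ge
    _ = 1 / 4 := hht.liminf_eq

theorem stmt_16 (s : ℤ) (hs : s ∈ ({-3, -2, 5, 6} : Set ℤ)) :
    dominationRatio {1, 2, 3, s} = 1 / 4 := by
  simp only [Set.mem_insert_iff, Set.mem_singleton_iff] at hs
  have lb : ∀ x ∈ lowerDensity '' {D : Set ℤ | Dominating {1, 2, 3, s} D}, 1 / 4 ≤ x := by
    rintro x ⟨D, hD, rfl⟩
    exact LB D (main_count s hs D hD)
  have hd0 : Dominating {1, 2, 3, s} {x : ℤ | (4 : ℤ) ∣ x} := D0_dominating s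
  have h0 : lowerDensity {x : ℤ | (4 : ℤ) ∣ x} = 1 / 4 :=
    le_antisymm D0_density_le (lb _ ⟨_, hd0, rfl⟩)
  rw [dominationRatio]
  apply le_antisymm
  · exact csInf_le ⟨1 / 4, lb⟩ ⟨_, hd0, h0⟩
  · exact le_csInf ⟨_, _, hd0, rfl⟩ lb
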